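/- For every real number c > 1, ∫₀¹ √( (1 − cos(2πt)) / (c − cos(2πt)) ) dt = (2/π) · arcsin( √(2/(c+1)) ). -/

import Mathlib

open Real intervalIntegral

/-- For every real `c > 1`,
`∫₀¹ √((1 − cos(2πt))/(c − cos(2πt))) dt = (2/π)·arcsin(√(2/(c+1)))`. -/
theorem stmt_17 (c : ℝ) (hc : 1 < c) :
    ∫ t in (0:ℝ)..1,
        Real.sqrt ((1 - Real.cos (2 * Real.pi * t)) / (c - Real.cos (2 * Real.pi * t)))
      = (2 / Real.pi) * Real.arcsin (Real.sqrt (2 / (c + 1))) := by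
  have hpi : (0:ℝ) < Real.pi := Real.pi_pos
  have hc1 : (0:ℝ) < c + 1 := by linarith
  set k := Real.sqrt (2 / (c + 1)) with hk
  have hk0 : 0 ≤ k := Real.sqrt_nonneg _
  have hk2 : k ^ 2 = 2 / (c + 1) := Real.sq_sqrt (by positivity)
  have hklt : k < 1 := by
    rw [hk, show (2:ℝ) / (c+1) = 2/(c+1) from rfl]
    have h2 : 2 / (c + 1) < 1 := by rw [div_lt_one hc1]; linarith
    calc Real.sqrt (2 / (c + 1)) < Real.sqrt 1 := Real.sqrt_lt_sqrt (by positivity) h2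
      _ = 1 := Real.sqrt_one
  have hden : ∀ t : ℝ, 0 < c - Real.cos (2 * Real.pi * t) := fun t => by
    nlinarith [Real.cos_le_one (2 * Real.pi * t)]
  set f : ℝ → ℝ := fun t => -(1 / Real.pi) * Real.arcsin (k * Real.cos (Real.pi * t)) with hf
  have key : ∀ t ∈ Set.uIcc (0:ℝ) 1, HasDerivAt f
      (Real.sqrt ((1 - Real.cos (2 * Real.pi * t)) / (c - Real.cos (2 * Real.pi * t)))) t := by
    intro t ht
    rw [Set.uIcc_of_le (by norm_num)] at ht
    have hs0 : 0 ≤ Real.sin (Real.pi * t) :=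
      Real.sin_nonneg_of_nonneg_of_le_pi (by nlinarith [ht.1]) (by nlinarith [ht.2])
    have hx : |k * Real.cos (Real.pi * t)| < 1 := by
      rw [abs_mul, abs_of_nonneg hk0]
      calc k * |Real.cos (Real.pi * t)| ≤ k * 1 := by
            exact mul_le_mul_of_nonneg_left (Real.abs_cos_le_one _) hk0
        _ < 1 := by linarith
    have h1 : HasDerivAt (fun u : ℝ => k * Real.cos (Real.pi * u))
        (k * (-Real.sin (Real.pi * t) * Real.pi)) t := by
      have := ((Real.hasDerivAt_cos (Real.pi * t)).comp t
        ((hasDerivAt_id t).const_mul Real.pi))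
      simpa using this.const_mul k
    have h2 : HasDerivAt (fun x : ℝ => Real.arcsin x)
        (1 / Real.sqrt (1 - (k * Real.cos (Real.pi * t)) ^ 2)) (k * Real.cos (Real.pi * t)) :=
      Real.hasDerivAt_arcsin (by nlinarith [abs_lt.mp hx]) (by nlinarith [abs_lt.mp hx])
    have h3 := (h2.comp t h1).const_mul (-(1 / Real.pi))
    convert h3 using 1
    case e'_4 => rfl
    case e'_5 => rfl
    case e'_8 => rfl
    -- now the scalar identity
    have hcos2 : Real.cos (2 * Real.pi * t) = 2 * Real.cos (Real.pi * t) ^ 2 - 1 := by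
      rw [show 2 * Real.pi * t = 2 * (Real.pi * t) by ring, Real.cos_two_mul]
    have hnum : 1 - Real.cos (2 * Real.pi * t) = 2 * Real.sin (Real.pi * t) ^ 2 := by
      rw [show 2 * Real.pi * t = 2 * (Real.pi * t) by ring, Real.cos_two_mul']
      linarith [Real.sin_sq_add_cos_sq (Real.pi * t)]
    have hone : 1 - (k * Real.cos (Real.pi * t)) ^ 2
        = (c - Real.cos (2 * Real.pi * t)) / (c + 1) := by
      rw [hcos2]; field_simp [mul_pow, hk2]
      have hkc : k ^ 2 * (c + 1) = 2 := by rw [hk2]; exact div_mul_cancel₀ _ hc1.ne'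
      linear_combination (-(Real.cos (Real.pi * t) ^ 2)) * hkc
    have hD := hden t
    rw [hnum, hone]
    rw [Real.sqrt_div (by positivity), Real.sqrt_div (by positivity),
      Real.sqrt_mul (by norm_num : (0:ℝ) ≤ 2), Real.sqrt_sq hs0]
    have hksq : k * Real.sqrt (c + 1) = Real.sqrt 2 := by
      rw [hk, ← Real.sqrt_mul (by positivity)]
      congr 1; field_simp
    have hsD : (0:ℝ) < Real.sqrt (c - Real.cos (2 * Real.pi * t)) := Real.sqrt_pos.mpr hD
    have hsc : (0:ℝ) < Real.sqrt (c + 1) := Real.sqrt_pos.mpr hc1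
    generalize Real.sqrt (c - Real.cos (2 * Real.pi * t)) = D at hsD ⊢
    field_simp
    linear_combination (-(Real.sin (Real.pi * t))) * hksq
  have hcont : Continuous fun t : ℝ =>
      Real.sqrt ((1 - Real.cos (2 * Real.pi * t)) / (c - Real.cos (2 * Real.pi * t))) := by
    apply Real.continuous_sqrt.comp
    have hc2 : Continuous fun t : ℝ => c - Real.cos (2 * Real.pi * t) :=
      continuous_const.sub (Real.continuous_cos.comp (continuous_const.mul continuous_id))
    have hc3 : Continuous fun t : ℝ => 1 - Real.cos (2 * Real.pi * t) :=
      continuous_const.sub (Real.continuous_cos.comp (continuous_const.mul continuous_id))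
    exact hc3.div hc2 (fun t => (hden t).ne')
  have := intervalIntegral.integral_eq_sub_of_hasDerivAt key (hcont.intervalIntegrable 0 1)
  rw [this]
  show -(1 / Real.pi) * Real.arcsin (k * Real.cos (Real.pi * 1)) -
      -(1 / Real.pi) * Real.arcsin (k * Real.cos (Real.pi * 0)) = _
  rw [mul_one, mul_zero, Real.cos_pi, Real.cos_zero, mul_one, mul_neg_one, Real.arcsin_neg]
  ring
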